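/- Let τ > 1 be irrational, η ∈ ℝ, and set τ' = 1/τ and η' = (1 − η)/τ. For every positive integer x, there exists an integer k with x = ⌊τk + η⌋ if and only if 0 < {xτ' + η'} ≤ τ', where {·} denotes the fractional part. -/
import Mathlib


/-- Let `τ > 1` be irrational, `η ∈ ℝ`, and set `τ' = 1/τ`,
`η' = (1 − η)/τ`.  For every positive integer `x`, there exists an integer `k` with
`x = ⌊τk + η⌋` if and only if `0 < {xτ' + η'} ≤ τ'`, where `{·}` is the fractional part. -/
theorem beatty_mem_iff_fract (τ η : ℝ) (hτ : 1 < τ) (hirr : Irrational τ)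
    (x : ℕ) (hx : 0 < x) :
    (∃ k : ℤ, (x : ℤ) = ⌊τ * (k : ℝ) + η⌋) ↔
      (0 < Int.fract ((x : ℝ) * (1 / τ) + (1 - η) / τ) ∧
        Int.fract ((x : ℝ) * (1 / τ) + (1 - η) / τ) ≤ 1 / τ) := by
  have hτ0 : (0:ℝ) < τ := lt_trans one_pos hτ
  have hτ'lt : 1/τ < 1 := by rw [div_lt_one hτ0]; exact hτ
  have key : (x : ℝ) * (1 / τ) + (1 - η) / τ = ((x:ℝ) + 1 - η) / τ := by
    field_simp; ring
  rw [key]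
  set t : ℝ := ((x:ℝ) + 1 - η) / τ with ht
  have hsub : t - 1/τ = ((x:ℝ) - η) / τ := by rw [ht]; ring
  constructor
  · rintro ⟨k, hk⟩
    have h1 : (x:ℝ) ≤ τ * k + η := by
      have h := Int.floor_le (τ * (k:ℝ) + η)
      rw [← hk] at h; exact_mod_cast h
    have h2 : τ * k + η < (x:ℝ) + 1 := by
      have h := Int.lt_floor_add_one (τ * (k:ℝ) + η)
      rw [← hk] at h; exact_mod_cast h
    have hk1 : (k:ℝ) < t := by
      rw [ht, lt_div_iff₀ hτ0]; nlinarith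
    have hk2 : t - 1/τ ≤ k := by
      rw [hsub, div_le_iff₀ hτ0]; nlinarith
    have hfl : ⌊t⌋ = k := by
      rw [Int.floor_eq_iff]
      constructor
      · exact le_of_lt (by linarith : (k:ℝ) < t)
      · push_cast; linarith
    have : Int.fract t = t - k := by rw [Int.fract, hfl]
    rw [this]
    constructor <;> linarith
  · rintro ⟨hpos, hle⟩
    refine ⟨⌊t⌋, ?_⟩
    have hk1 : (⌊t⌋:ℝ) < t := by
      have := Int.fract_nonneg t
      rw [Int.fract] at hpos; linarith
    have hk2 : t - 1/τ ≤ ⌊t⌋ := by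
      rw [Int.fract] at hle; linarith
    rw [hsub, div_le_iff₀ hτ0] at hk2
    rw [ht, lt_div_iff₀ hτ0] at hk1
    symm
    rw [Int.floor_eq_iff]
    constructor
    · push_cast; nlinarith
    · push_cast; nlinarith
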